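/- Let P be a real polynomial of degree at least 1. Then there do not exist real polynomials M and N with M ≠ 0, gcd(M, N) = 1, satisfying M·(M − N' + N·P) = −N·M'. -/
import Mathlib


open Polynomial

theorem no_elementary_antiderivative_core (P : ℝ[X]) (hP : 1 ≤ P.natDegree) :
    ¬ ∃ M N : ℝ[X], M ≠ 0 ∧ IsCoprime M N ∧
      M * (M - derivative N + N * P) = -(N * derivative M) := by
  rintro ⟨M, N, hM, hcop, heq⟩
  have hPne : P ≠ 0 := fun h => by simp [h] at hP
  -- M divides N * M'
  have hdvd : M ∣ N * derivative M := by
    refine ⟨-(M - derivative N + N * P), ?_⟩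
    linear_combination heq
  have hdvd' : M ∣ derivative M := hcop.dvd_of_dvd_mul_left hdvd
  have hM' : derivative M = 0 := by
    by_contra h
    have h1 := Polynomial.natDegree_le_of_dvd hdvd' h
    have hd : M.natDegree ≠ 0 := fun hc => h (by
      rw [Polynomial.eq_C_of_natDegree_eq_zero hc]; simp)
    have h2 := Polynomial.natDegree_derivative_lt (p := M) hd
    omega
  -- hence M - N' + N*P = 0
  have hzero : M - derivative N + N * P = 0 := by
    have : M * (M - derivative N + N * P) = 0 := by rw [heq, hM', mul_zero, neg_zero]
    exact (mul_eq_zero.mp this).resolve_left hM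
  have hMdeg : M.natDegree = 0 := natDegree_eq_zero_of_derivative_eq_zero hM'
  have hN : N ≠ 0 := by
    rintro rfl
    simp at hzero
    exact hM hzero
  have hNP : (N * P).natDegree = N.natDegree + P.natDegree :=
    Polynomial.natDegree_mul hN hPne
  have hNP' : N * P = derivative N - M := by linear_combination hzero
  have hle : (derivative N - M).natDegree ≤ max (derivative N).natDegree M.natDegree :=
    Polynomial.natDegree_sub_le _ _
  have hder : (derivative N).natDegree ≤ N.natDegree - 1 :=
    Polynomial.natDegree_derivative_le N
  rw [← hNP', hNP] at hle
  omega
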